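/- Let μ and ν be good full non-atomic Borel probability measures on non-compact locally compact Cantor sets X and Y. If S(μ) = S(ν), then there exists a homeomorphism h : X → Y with μ(E) = ν(h(E)) for every Borel set E ⊆ X. -/

import Mathlib

open MeasureTheory Topology ENNReal TopologicalSpace

/-- A set is compact open. -/
def IsCompactOpen {X : Type*} [TopologicalSpace X] (U : Set X) : Prop :=
  IsCompact U ∧ IsOpen U

/-- The defective set of a measure: points all of whose compact open
neighbourhoods have infinite measure. -/
def DefectiveSet {X : Type*} [TopologicalSpace X] [MeasurableSpace X]
    (μ : Measure X) : Set X :=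
  {x | ∀ U : Set X, IsCompactOpen U → x ∈ U → μ U = ⊤}

/-- A compact open set `V` is good for `μ`. -/
def GoodSet {X : Type*} [TopologicalSpace X] [MeasurableSpace X]
    (μ : Measure X) (V : Set X) : Prop :=
  ∀ U : Set X, IsCompactOpen U → μ U < μ V →
    ∃ W : Set X, W ⊆ V ∧ IsCompactOpen W ∧ μ W = μ U

/-- The measure `μ` is good: every compact open set is good for `μ`. -/
def Good {X : Type*} [TopologicalSpace X] [MeasurableSpace X]
    (μ : Measure X) : Prop :=
  ∀ V : Set X, IsCompactOpen V → GoodSet μ V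

/-- The restriction of `μ` to the (open) subset `A` is good: compact open
subsets of the subspace `A` are exactly compact open subsets of `X` contained
in `A`. -/
def GoodOn {X : Type*} [TopologicalSpace X] [MeasurableSpace X]
    (μ : Measure X) (A : Set X) : Prop :=
  ∀ U V : Set X, IsCompactOpen U → U ⊆ A → IsCompactOpen V → V ⊆ A → μ U < μ V →
    ∃ W : Set X, W ⊆ V ∧ IsCompactOpen W ∧ μ W = μ U

/-- The compact open values set, as a set of extended nonnegative reals. -/
def SE {X : Type*} [TopologicalSpace X] [MeasurableSpace X]
    (μ : Measure X) : Set ℝ≥0∞ :=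
  {v | v ≠ ⊤ ∧ ∃ U : Set X, IsCompactOpen U ∧ μ U = v}

/-- The compact open values set of the restriction of `μ` to `A`. -/
def SEOn {X : Type*} [TopologicalSpace X] [MeasurableSpace X]
    (μ : Measure X) (A : Set X) : Set ℝ≥0∞ :=
  {v | v ≠ ⊤ ∧ ∃ U : Set X, IsCompactOpen U ∧ U ⊆ A ∧ μ U = v}

/-- The compact open values set, as a set of reals. -/
def Sreal {X : Type*} [TopologicalSpace X] [MeasurableSpace X]
    (μ : Measure X) : Set ℝ :=
  {r | ∃ U : Set X, IsCompactOpen U ∧ μ U ≠ ⊤ ∧ (μ U).toReal = r}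

/-- The compact open values set of the restriction of `μ` to `A`, as reals. -/
def SrealOn {X : Type*} [TopologicalSpace X] [MeasurableSpace X]
    (μ : Measure X) (A : Set X) : Set ℝ :=
  {r | ∃ U : Set X, IsCompactOpen U ∧ U ⊆ A ∧ μ U ≠ ⊤ ∧ (μ U).toReal = r}

/-- A measure is full if every non-empty open set has positive measure. -/
def IsFull {X : Type*} [TopologicalSpace X] [MeasurableSpace X]
    (μ : Measure X) : Prop :=
  ∀ U : Set X, IsOpen U → U.Nonempty → 0 < μ U

/-- A measure is non-atomic if every singleton has measure zero. -/
def NonAtomic {X : Type*} [MeasurableSpace X] (μ : Measure X) : Prop :=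
  ∀ x : X, μ {x} = 0

/-- The space has a countable basis consisting of compact open sets. -/
def HasCompactOpenBasis (X : Type*) [TopologicalSpace X] : Prop :=
  ∃ B : Set (Set X), B.Countable ∧ TopologicalSpace.IsTopologicalBasis B ∧
    ∀ U ∈ B, IsCompact U ∧ IsOpen U

/-- The space has no isolated points. -/
def NoIsolatedPoints (X : Type*) [TopologicalSpace X] : Prop :=
  ∀ x : X, ¬ IsOpen ({x} : Set X)

open Set Filter

set_option linter.unusedSectionVars false
set_option linter.unusedVariables false
set_option maxHeartbeats 1000000

namespace Akin
variable {X : Type*} [MetricSpace X]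

lemma co_empty : IsCompactOpen (∅ : Set X) := ⟨isCompact_empty, isOpen_empty⟩
lemma co_union {U V : Set X} (hU : IsCompactOpen U) (hV : IsCompactOpen V) :
    IsCompactOpen (U ∪ V) := ⟨hU.1.union hV.1, hU.2.union hV.2⟩
lemma co_inter {U V : Set X} (hU : IsCompactOpen U) (hV : IsCompactOpen V) :
    IsCompactOpen (U ∩ V) := ⟨hU.1.inter_right hV.1.isClosed, hU.2.inter hV.2⟩
lemma co_diff {U V : Set X} (hU : IsCompactOpen U) (hV : IsCompactOpen V) :
    IsCompactOpen (U \ V) :=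
  ⟨hU.1.inter_right hV.2.isClosed_compl, hU.2.sdiff hV.1.isClosed⟩

variable [MeasurableSpace X] [BorelSpace X] {μ : Measure X} [IsProbabilityMeasure μ]

lemma co_meas {U : Set X} (hU : IsCompactOpen U) : MeasurableSet U := hU.2.measurableSet

lemma meas_ne_top (μ : Measure X) [IsProbabilityMeasure μ] (U : Set X) : μ U ≠ ⊤ :=
  (lt_of_le_of_lt (measure_mono (subset_univ U)) (by simp)).ne

lemma full_empty (hf : IsFull μ) {U : Set X} (hU : IsOpen U) (h : μ U = 0) : U = ∅ := by
  by_contra hne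
  exact absurd h (hf U hU (nonempty_iff_ne_empty.2 hne)).ne'

lemma meas_lt_one [NoncompactSpace X] (hf : IsFull μ) {U : Set X} (hU : IsCompactOpen U) :
    μ U < 1 := by
  have hne : Uᶜ.Nonempty := by
    rw [nonempty_compl]
    intro h
    exact NoncompactSpace.noncompact_univ (h ▸ hU.1)
  have h1 : 0 < μ Uᶜ := hf _ hU.1.isClosed.isOpen_compl hne
  have h2 : μ Uᶜ = 1 - μ U := by
    rw [measure_compl (co_meas hU) (meas_ne_top μ U), measure_univ]
  have h3 : μ U ≤ 1 := (measure_mono (subset_univ U)).trans (by simp)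
  rcases lt_or_eq_of_le h3 with h | h
  · exact h
  · rw [h] at h2; simp at h2; exact absurd h2 h1.ne'

/-- exhaustion by compact opens -/
lemma exists_exhaustion [Nonempty X] (hB : HasCompactOpenBasis X) :
    ∃ K : ℕ → Set X, Monotone K ∧ (∀ n, IsCompactOpen (K n)) ∧ (⋃ n, K n) = univ := by
  obtain ⟨B, hBc, hBb, hBco⟩ := hB
  have hBne : B.Nonempty := by
    obtain ⟨x⟩ := ‹Nonempty X›
    obtain ⟨U, hU, _, -⟩ := hBb.exists_subset_of_mem_open (mem_univ x) isOpen_univ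
    exact ⟨U, hU⟩
  obtain ⟨f, hf⟩ := hBc.exists_eq_range hBne
  refine ⟨fun n => ⋃ i ∈ Finset.range (n+1), f i, ?_, ?_, ?_⟩
  · intro m n hmn
    apply Set.iUnion₂_subset
    intro i hi
    apply Set.subset_biUnion_of_mem (u := fun i => f i)
    show i ∈ Finset.range (n+1)
    simp only [Finset.mem_range] at *
    omega
  · intro n
    constructor
    · exact (Finset.range (n+1)).isCompact_biUnion fun i _ => (hBco _ (hf ▸ mem_range_self i)).1
    · exact isOpen_biUnion fun i _ => (hBco _ (hf ▸ mem_range_self i)).2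
  · apply eq_univ_of_forall
    intro x
    obtain ⟨U, hU, hx, -⟩ := hBb.exists_subset_of_mem_open (mem_univ x) isOpen_univ
    rw [hf] at hU
    obtain ⟨i, rfl⟩ := hU
    exact mem_iUnion.2 ⟨i, by simp [mem_iUnion]; exact ⟨i, by simp, hx⟩⟩

/-- measure enlargement: given compact open C and t<1, find compact open E ⊇ C with t < μ E -/
lemma exists_large (hB : HasCompactOpenBasis X) [Nonempty X] {C : Set X} (hC : IsCompactOpen C)
    {t : ℝ≥0∞} (ht : t < 1) : ∃ E : Set X, IsCompactOpen E ∧ C ⊆ E ∧ t < μ E := by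
  obtain ⟨K, hKmono, hKco, hKun⟩ := exists_exhaustion hB
  have : Filter.Tendsto (fun n => μ (K n)) atTop (𝓝 (μ (⋃ n, K n))) :=
    tendsto_measure_iUnion_atTop hKmono
  rw [hKun, measure_univ] at this
  obtain ⟨n, hn⟩ := (this.eventually (eventually_gt_nhds ht)).exists
  exact ⟨K n ∪ C, co_union (hKco n) hC, subset_union_right, lt_of_lt_of_le hn
    (measure_mono subset_union_left)⟩


variable {X : Type*} [MetricSpace X]

/-- union of a list of sets -/
def lU (l : List (Set X)) : Set X := ⋃ s ∈ l, s

@[simp] lemma lU_nil : lU ([] : List (Set X)) = ∅ := by simp [lU]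
@[simp] lemma lU_cons (a : Set X) (l : List (Set X)) : lU (a :: l) = a ∪ lU l := by
  ext x; simp [lU]
@[simp] lemma lU_append (l l' : List (Set X)) : lU (l ++ l') = lU l ∪ lU l' := by
  ext x
  simp only [lU, mem_iUnion, List.mem_append, mem_union]
  constructor
  · rintro ⟨s, hs | hs, hxs⟩
    · exact Or.inl ⟨s, hs, hxs⟩
    · exact Or.inr ⟨s, hs, hxs⟩
  · rintro (⟨s, hs, hxs⟩ | ⟨s, hs, hxs⟩) <;> exact ⟨s, by tauto, hxs⟩

lemma lU_map {α : Type*} (f : α → Set X) (l : List α) : lU (l.map f) = ⋃ a ∈ l, f a := by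
  ext x; simp [lU]

lemma subset_lU {l : List (Set X)} {s : Set X} (h : s ∈ l) : s ⊆ lU l :=
  subset_biUnion_of_mem (u := fun s => s) h

lemma lU_subset {l : List (Set X)} {t : Set X} (h : ∀ s ∈ l, s ⊆ t) : lU l ⊆ t :=
  iUnion₂_subset h

lemma lU_meas [MeasurableSpace X] [BorelSpace X] {l : List (Set X)}
    (h : ∀ s ∈ l, IsCompactOpen s) : MeasurableSet (lU l) := by
  induction l with
  | nil => simp
  | cons a l ih =>
    rw [lU_cons]
    exact ((h a (by simp)).2.measurableSet).union (ih fun s hs => h s (by simp [hs]))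

lemma lU_co {l : List (Set X)} (h : ∀ s ∈ l, IsCompactOpen s) : IsCompactOpen (lU l) := by
  induction l with
  | nil => simp; exact ⟨isCompact_empty, isOpen_empty⟩
  | cons a l ih =>
    rw [lU_cons]
    have h1 := h a (by simp)
    have h2 := ih fun s hs => h s (by simp [hs])
    exact ⟨h1.1.union h2.1, h1.2.union h2.2⟩

lemma disjoint_lU {l : List (Set X)} {s : Set X} (h : ∀ t ∈ l, Disjoint s t) :
    Disjoint s (lU l) := by
  rw [lU, Set.disjoint_iUnion₂_right]; exact h

lemma meas_lU [MeasurableSpace X] [BorelSpace X] (μ : Measure X) {l : List (Set X)}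
    (hd : l.Pairwise Disjoint) (h : ∀ s ∈ l, IsCompactOpen s) :
    μ (lU l) = (l.map (fun s => μ s)).sum := by
  induction l with
  | nil => simp
  | cons a l ih =>
    rw [lU_cons, List.map_cons, List.sum_cons,
      measure_union (disjoint_lU (List.pairwise_cons.1 hd).1)
        (lU_meas fun s hs => h s (by simp [hs])),
      ih (List.pairwise_cons.1 hd).2 fun s hs => h s (by simp [hs])]

/-- make a list of sets pairwise disjoint -/
def disjointify : List (Set X) → List (Set X)
  | [] => []
  | a :: l => a :: (disjointify l).map (· \ a)

lemma disjointify_lU (l : List (Set X)) : lU (disjointify l) = lU l := by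
  induction l with
  | nil => rfl
  | cons a l ih =>
    simp only [disjointify, lU_cons]
    rw [lU_map]
    have hmap : (⋃ s ∈ disjointify l, s \ a) = lU (disjointify l) \ a := by
      ext x
      simp only [mem_iUnion, mem_diff, lU]
      tauto
    rw [hmap, ih]
    ext x
    by_cases hx : x ∈ a <;> simp [hx]

lemma disjointify_subset {l : List (Set X)} {s : Set X} (h : s ∈ disjointify l) :
    ∃ b ∈ l, s ⊆ b := by
  induction l generalizing s with
  | nil => simp [disjointify] at h
  | cons a l ih =>
    simp only [disjointify, List.mem_cons, List.mem_map] at h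
    rcases h with rfl | ⟨t, ht, rfl⟩
    · exact ⟨s, by simp, subset_rfl⟩
    · obtain ⟨b, hb, hsb⟩ := ih ht
      exact ⟨b, by simp [hb], diff_subset.trans hsb⟩

lemma disjointify_co {l : List (Set X)} (h : ∀ b ∈ l, IsCompactOpen b) :
    ∀ s ∈ disjointify l, IsCompactOpen s := by
  induction l with
  | nil => simp [disjointify]
  | cons a l ih =>
    intro s hs
    simp only [disjointify, List.mem_cons, List.mem_map] at hs
    rcases hs with rfl | ⟨t, ht, rfl⟩
    · exact h s (by simp)
    · exact co_diff (ih (fun b hb => h b (by simp [hb])) t ht) (h a (by simp))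

lemma disjointify_pairwise (l : List (Set X)) :
    (disjointify l).Pairwise Disjoint := by
  induction l with
  | nil => simp [disjointify]
  | cons a l ih =>
    simp only [disjointify, List.pairwise_cons]
    constructor
    · rintro s hs
      simp only [List.mem_map] at hs
      obtain ⟨t, ht, rfl⟩ := hs
      exact Set.disjoint_sdiff_right
    · exact (List.pairwise_map).2 (ih.imp fun h => h.mono diff_subset diff_subset)


/-- partition a compact open set into small compact open pieces -/
lemma exists_small_partition (hB : HasCompactOpenBasis X) {U : Set X} (hU : IsCompactOpen U)
    {eps : ℝ≥0∞} (heps : 0 < eps) :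
    ∃ l : List (Set X), l.Pairwise Disjoint ∧ (∀ s ∈ l, IsCompactOpen s ∧ EMetric.diam s ≤ eps)
      ∧ lU l = U := by
  obtain ⟨B, hBc, hBb, hBco⟩ := hB
  have hball : ∀ x : X, x ∈ U → ∃ b : Set X, b ∈ B ∧ x ∈ b ∧ b ⊆ U ∧ EMetric.diam b ≤ eps := by
    intro x hx
    have hop : IsOpen (U ∩ EMetric.ball x (eps / 2)) := hU.2.inter EMetric.isOpen_ball
    have hmem : x ∈ U ∩ EMetric.ball x (eps / 2) :=
      ⟨hx, EMetric.mem_ball_self (ENNReal.div_pos heps.ne' (by norm_num))⟩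
    obtain ⟨b, hb, hxb, hbsub⟩ := hBb.exists_subset_of_mem_open hmem hop
    refine ⟨b, hb, hxb, hbsub.trans inter_subset_left, ?_⟩
    calc EMetric.diam b ≤ EMetric.diam (EMetric.ball x (eps / 2)) :=
          EMetric.diam_mono (hbsub.trans inter_subset_right)
      _ ≤ 2 * (eps / 2) := EMetric.diam_ball
      _ ≤ eps := by
          rw [ENNReal.mul_div_cancel' (by norm_num) (by norm_num)]
  choose! b hbB hxb hbU hbd using hball
  obtain ⟨t, ht⟩ := hU.1.elim_finite_subcover (fun i : U => b ↑i)
    (fun i => (hBco _ (hbB ↑i i.2)).2) (fun x hx => mem_iUnion.2 ⟨⟨x, hx⟩, hxb x hx⟩)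
  set l₀ : List (Set X) := t.toList.map (fun i : U => b ↑i) with hl₀
  have hmem : ∀ s ∈ l₀, ∃ i : U, b ↑i = s := by
    intro s hs
    rw [hl₀, List.mem_map] at hs
    obtain ⟨i, -, rfl⟩ := hs
    exact ⟨i, rfl⟩
  have hl₀co : ∀ s ∈ l₀, IsCompactOpen s := by
    intro s hs
    obtain ⟨i, rfl⟩ := hmem s hs
    exact ⟨(hBco _ (hbB ↑i i.2)).1, (hBco _ (hbB ↑i i.2)).2⟩
  have hl₀d : ∀ s ∈ l₀, EMetric.diam s ≤ eps := by
    intro s hs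
    obtain ⟨i, rfl⟩ := hmem s hs
    exact hbd ↑i i.2
  have hl₀U : lU l₀ = U := by
    apply subset_antisymm
    · apply lU_subset
      intro s hs
      obtain ⟨i, rfl⟩ := hmem s hs
      exact hbU ↑i i.2
    · intro x hx
      have := ht hx
      simp only [mem_iUnion] at this
      obtain ⟨i, hi, hxi⟩ := this
      exact subset_lU (by rw [hl₀, List.mem_map]; exact ⟨i, Finset.mem_toList.2 hi, rfl⟩) hxi
  refine ⟨disjointify l₀, disjointify_pairwise l₀, ?_, by rw [disjointify_lU, hl₀U]⟩
  intro s hs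
  obtain ⟨b', hb', hsb'⟩ := disjointify_subset hs
  exact ⟨disjointify_co hl₀co s hs, le_trans (EMetric.diam_mono hsb') (hl₀d b' hb')⟩


section Two

variable {X Y : Type*} [MetricSpace X] [MeasurableSpace X] [BorelSpace X]
  [MetricSpace Y] [MeasurableSpace Y] [BorelSpace Y]
  {μ : Measure X} {ν : Measure Y} [IsProbabilityMeasure μ] [IsProbabilityMeasure ν]

/-- every compact-open value of `μ` is attained by `ν` -/
def Transfer (μ : Measure X) (ν : Measure Y) : Prop :=
  ∀ U : Set X, IsCompactOpen U → ∃ V : Set Y, IsCompactOpen V ∧ ν V = μ U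

lemma transfer_of_Sreal (h : Sreal μ = Sreal ν) : Transfer μ ν := by
  intro U hU
  have : (μ U).toReal ∈ Sreal μ := ⟨U, hU, meas_ne_top μ U, rfl⟩
  rw [h] at this
  obtain ⟨V, hV, hVt, hVr⟩ := this
  exact ⟨V, hV, (ENNReal.toReal_eq_toReal_iff' hVt (meas_ne_top μ U)).1 hVr⟩

/-- split off a compact open subset of prescribed measure -/
lemma exists_subset_meas (hgν : Good ν) (htr : Transfer μ ν) {V : Set Y}
    (hV : IsCompactOpen V) {U : Set X} (hU : IsCompactOpen U) (hle : μ U ≤ ν V) :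
    ∃ W : Set Y, W ⊆ V ∧ IsCompactOpen W ∧ ν W = μ U := by
  rcases eq_or_lt_of_le hle with h | h
  · exact ⟨V, subset_rfl, hV, h.symm⟩
  · obtain ⟨U', hU', hU'v⟩ := htr U hU
    obtain ⟨W, hWV, hWco, hWm⟩ := hgν V hV U' hU' (by rw [hU'v]; exact h)
    exact ⟨W, hWV, hWco, by rw [hWm, hU'v]⟩

/-- split a compact open set along a list of prescribed measures -/
lemma exists_list_split (hgν : Good ν) (hfν : IsFull ν) (htr : Transfer μ ν)
    (us : List (Set X)) (hus : ∀ u ∈ us, IsCompactOpen u) :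
    ∀ V : Set Y, IsCompactOpen V → (us.map (fun u => μ u)).sum = ν V →
    ∃ vs : List (Set Y), vs.Pairwise Disjoint ∧ (∀ v ∈ vs, IsCompactOpen v) ∧
      lU vs = V ∧ List.Forall₂ (fun u v => ν v = μ u) us vs := by
  induction us with
  | nil =>
    intro V hV hsum
    simp only [List.map_nil, List.sum_nil] at hsum
    refine ⟨[], by simp, by simp, ?_, List.Forall₂.nil⟩
    rw [lU_nil, full_empty hfν hV.2 hsum.symm]
  | cons u us ih =>
    intro V hV hsum
    simp only [List.map_cons, List.sum_cons] at hsum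
    have hu := hus u (by simp)
    have hle : μ u ≤ ν V := hsum ▸ le_self_add
    obtain ⟨W, hWV, hWco, hWm⟩ := exists_subset_meas hgν htr hV hu hle
    have hdco : IsCompactOpen (V \ W) := co_diff hV hWco
    have hdm : (us.map (fun u => μ u)).sum = ν (V \ W) := by
      rw [measure_diff hWV (co_meas hWco).nullMeasurableSet (meas_ne_top ν W), hWm, ← hsum,
        ENNReal.add_sub_cancel_left (meas_ne_top μ u)]
    obtain ⟨vs, hvsd, hvsco, hvsU, hvsF⟩ :=
      ih (fun u hu => hus u (by simp [hu])) (V \ W) hdco hdm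
    refine ⟨W :: vs, ?_, ?_, ?_, List.Forall₂.cons hWm hvsF⟩
    · rw [List.pairwise_cons]
      refine ⟨fun v hv => ?_, hvsd⟩
      have : v ⊆ V \ W := hvsU ▸ subset_lU hv
      exact Set.disjoint_sdiff_right.mono_right this
    · intro v hv
      rcases List.mem_cons.1 hv with rfl | hv
      · exact hWco
      · exact hvsco v hv
    · rw [lU_cons, hvsU, Set.union_diff_cancel hWV]

/-- find a compact open set of prescribed measure disjoint from a given compact open set -/
lemma exists_disjoint_piece [Nonempty Y] [NoncompactSpace Y] (hBY : HasCompactOpenBasis Y)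
    (hgν : Good ν) (htr : Transfer μ ν) {C : Set Y} (hC : IsCompactOpen C)
    {U : Set X} (hU : IsCompactOpen U) (hlt : ν C + μ U < 1) :
    ∃ W : Set Y, IsCompactOpen W ∧ Disjoint W C ∧ ν W = μ U := by
  obtain ⟨E, hE, hCE, hEm⟩ := exists_large (μ := ν) hBY hC hlt
  have hdco : IsCompactOpen (E \ C) := co_diff hE hC
  have hlt2 : μ U < ν (E \ C) := by
    rw [measure_diff hCE (co_meas hC).nullMeasurableSet (meas_ne_top ν C)]
    rw [lt_tsub_iff_right]
    calc μ U + ν C = ν C + μ U := add_comm _ _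
      _ < ν E := hEm
  obtain ⟨W, hWsub, hWco, hWm⟩ := exists_subset_meas hgν htr hdco hU hlt2.le
  exact ⟨W, hWco, Set.disjoint_sdiff_left.mono_left hWsub, hWm⟩

section Pairs

/-- first components -/
def fstl (L : List (Set X × Set Y)) : List (Set X) := L.map Prod.fst
/-- second components -/
def sndl (L : List (Set X × Set Y)) : List (Set Y) := L.map Prod.snd
/-- union of first components -/
def AU (L : List (Set X × Set Y)) : Set X := lU (fstl L)
/-- union of second components -/
def BU (L : List (Set X × Set Y)) : Set Y := lU (sndl L)

/-- invariant of a matched partial partition -/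
def Pre (μ : Measure X) (ν : Measure Y) (L : List (Set X × Set Y)) : Prop :=
  L.Pairwise (fun p q => Disjoint p.1 q.1 ∧ Disjoint p.2 q.2) ∧
  ∀ p ∈ L, IsCompactOpen p.1 ∧ IsCompactOpen p.2 ∧ μ p.1 = ν p.2

@[simp] lemma fstl_nil : fstl ([] : List (Set X × Set Y)) = [] := rfl
@[simp] lemma fstl_cons (p : Set X × Set Y) (L) : fstl (p :: L) = p.1 :: fstl L := rfl
@[simp] lemma fstl_append (L L' : List (Set X × Set Y)) : fstl (L ++ L') = fstl L ++ fstl L' :=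
  List.map_append
@[simp] lemma sndl_nil : sndl ([] : List (Set X × Set Y)) = [] := rfl
@[simp] lemma sndl_cons (p : Set X × Set Y) (L) : sndl (p :: L) = p.2 :: sndl L := rfl
@[simp] lemma sndl_append (L L' : List (Set X × Set Y)) : sndl (L ++ L') = sndl L ++ sndl L' :=
  List.map_append
@[simp] lemma AU_nil : AU ([] : List (Set X × Set Y)) = ∅ := by simp [AU]
@[simp] lemma AU_cons (p : Set X × Set Y) (L) : AU (p :: L) = p.1 ∪ AU L := by simp [AU]
@[simp] lemma AU_append (L L' : List (Set X × Set Y)) : AU (L ++ L') = AU L ∪ AU L' := by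
  simp [AU]
@[simp] lemma BU_nil : BU ([] : List (Set X × Set Y)) = ∅ := by simp [BU]
@[simp] lemma BU_cons (p : Set X × Set Y) (L) : BU (p :: L) = p.2 ∪ BU L := by simp [BU]
@[simp] lemma BU_append (L L' : List (Set X × Set Y)) : BU (L ++ L') = BU L ∪ BU L' := by
  simp [BU]

lemma subset_AU {L : List (Set X × Set Y)} {p} (hp : p ∈ L) : p.1 ⊆ AU L :=
  subset_lU (List.mem_map.2 ⟨p, hp, rfl⟩)
lemma subset_BU {L : List (Set X × Set Y)} {p} (hp : p ∈ L) : p.2 ⊆ BU L :=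
  subset_lU (List.mem_map.2 ⟨p, hp, rfl⟩)

lemma AU_co {L : List (Set X × Set Y)} (hL : Pre μ ν L) : IsCompactOpen (AU L) := by
  apply lU_co
  intro s hs
  obtain ⟨p, hp, rfl⟩ := List.mem_map.1 hs
  exact (hL.2 p hp).1
lemma BU_co {L : List (Set X × Set Y)} (hL : Pre μ ν L) : IsCompactOpen (BU L) := by
  apply lU_co
  intro s hs
  obtain ⟨p, hp, rfl⟩ := List.mem_map.1 hs
  exact (hL.2 p hp).2.1

lemma disjoint_AU {L : List (Set X × Set Y)} {s : Set X}
    (h : ∀ p ∈ L, Disjoint s p.1) : Disjoint s (AU L) := by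
  apply disjoint_lU
  intro t ht
  obtain ⟨p, hp, rfl⟩ := List.mem_map.1 ht
  exact h p hp
lemma disjoint_BU {L : List (Set X × Set Y)} {s : Set Y}
    (h : ∀ p ∈ L, Disjoint s p.2) : Disjoint s (BU L) := by
  apply disjoint_lU
  intro t ht
  obtain ⟨p, hp, rfl⟩ := List.mem_map.1 ht
  exact h p hp

lemma pre_meq {L : List (Set X × Set Y)} (hL : Pre μ ν L) : μ (AU L) = ν (BU L) := by
  have hp1 : (fstl L).Pairwise Disjoint :=
    List.Pairwise.map Prod.fst (fun a b h => h.1) hL.1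
  have hp2 : (sndl L).Pairwise Disjoint :=
    List.Pairwise.map Prod.snd (fun a b h => h.2) hL.1
  rw [AU, BU, meas_lU μ hp1
      (fun s hs => by obtain ⟨p, hp, rfl⟩ := List.mem_map.1 hs; exact (hL.2 p hp).1),
    meas_lU ν hp2
      (fun s hs => by obtain ⟨p, hp, rfl⟩ := List.mem_map.1 hs; exact (hL.2 p hp).2.1)]
  rw [fstl, sndl, List.map_map, List.map_map]
  congr 1
  exact List.map_congr_left fun p hp => (hL.2 p hp).2.2

lemma pre_swap {L : List (Set X × Set Y)} (hL : Pre μ ν L) :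
    Pre ν μ (L.map Prod.swap) := by
  constructor
  · exact (List.pairwise_map).2 (hL.1.imp fun h => ⟨h.2, h.1⟩)
  · intro p hp
    obtain ⟨q, hq, rfl⟩ := List.mem_map.1 hp
    obtain ⟨h1, h2, h3⟩ := hL.2 q hq
    exact ⟨h2, h1, h3.symm⟩

@[simp] lemma AU_swap (L : List (Set X × Set Y)) : AU (L.map Prod.swap) = BU L := by
  simp [AU, BU, fstl, sndl, List.map_map]; rfl
@[simp] lemma BU_swap (L : List (Set X × Set Y)) : BU (L.map Prod.swap) = AU L := by
  simp [AU, BU, fstl, sndl, List.map_map]; rfl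

/-- split a compact open set into pieces matching a given disjoint list -/
lemma exists_pair_split (hgν : Good ν) (hfν : IsFull ν) (htr : Transfer μ ν)
    (us : List (Set X)) (hus : ∀ u ∈ us, IsCompactOpen u) (husd : us.Pairwise Disjoint) :
    ∀ V : Set Y, IsCompactOpen V → (us.map (fun u => μ u)).sum = ν V →
    ∃ M : List (Set X × Set Y), Pre μ ν M ∧ fstl M = us ∧ BU M = V := by
  induction us with
  | nil =>
    intro V hV hsum
    simp only [List.map_nil, List.sum_nil] at hsum
    exact ⟨[], ⟨by simp, by simp⟩, rfl, by rw [BU_nil, full_empty hfν hV.2 hsum.symm]⟩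
  | cons u us ih =>
    intro V hV hsum
    simp only [List.map_cons, List.sum_cons] at hsum
    have hu := hus u (by simp)
    have hle : μ u ≤ ν V := hsum ▸ le_self_add
    obtain ⟨W, hWV, hWco, hWm⟩ := exists_subset_meas hgν htr hV hu hle
    have hdco : IsCompactOpen (V \ W) := co_diff hV hWco
    have hdm : (us.map (fun u => μ u)).sum = ν (V \ W) := by
      rw [measure_diff hWV (co_meas hWco).nullMeasurableSet (meas_ne_top ν W), hWm, ← hsum,
        ENNReal.add_sub_cancel_left (meas_ne_top μ u)]
    obtain ⟨M, hM, hMf, hMB⟩ :=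
      ih (fun u hu => hus u (by simp [hu])) (List.pairwise_cons.1 husd).2 (V \ W) hdco hdm
    refine ⟨(u, W) :: M, ⟨?_, ?_⟩, by rw [fstl_cons, hMf], ?_⟩
    · rw [List.pairwise_cons]
      refine ⟨fun q hq => ⟨?_, ?_⟩, hM.1⟩
      · have : q.1 ∈ us := hMf ▸ List.mem_map.2 ⟨q, hq, rfl⟩
        exact (List.pairwise_cons.1 husd).1 q.1 this
      · exact Set.disjoint_sdiff_right.mono_right (hMB ▸ subset_BU hq)
    · intro p hp
      rcases List.mem_cons.1 hp with rfl | hp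
      · exact ⟨hu, hWco, hWm.symm⟩
      · exact hM.2 p hp
    · rw [BU_cons, hMB, Set.union_diff_cancel hWV]

/-- glue refinements of the individual pairs of a matched list -/
lemma glue (P : Set X × Set Y → Prop) :
    ∀ L : List (Set X × Set Y), Pre μ ν L →
    (∀ p ∈ L, ∃ M, Pre μ ν M ∧ (∀ q ∈ M, q.1 ⊆ p.1 ∧ q.2 ⊆ p.2 ∧ P q) ∧
      AU M = p.1 ∧ BU M = p.2) →
    ∃ L', Pre μ ν L' ∧ (∀ q ∈ L', (∃ p ∈ L, q.1 ⊆ p.1 ∧ q.2 ⊆ p.2) ∧ P q) ∧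
      AU L' = AU L ∧ BU L' = BU L := by
  intro L
  induction L with
  | nil => exact fun _ _ => ⟨[], ⟨by simp, by simp⟩, by simp, by simp, by simp⟩
  | cons p L ih =>
    intro hL F
    obtain ⟨M, hM, hMsub, hMA, hMB⟩ := F p (by simp)
    have hLtail : Pre μ ν L := ⟨(List.pairwise_cons.1 hL.1).2, fun q hq => hL.2 q (by simp [hq])⟩
    obtain ⟨L'', hL'', hsub'', hA'', hB''⟩ := ih hLtail (fun q hq => F q (by simp [hq]))
    have hhead := (List.pairwise_cons.1 hL.1).1
    refine ⟨M ++ L'', ⟨?_, ?_⟩, ?_, by simp [hMA, hA''], by simp [hMB, hB'']⟩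
    · rw [List.pairwise_append]
      refine ⟨hM.1, hL''.1, ?_⟩
      intro q hq r hr
      obtain ⟨⟨p', hp', hr1, hr2⟩, -⟩ := hsub'' r hr
      obtain ⟨hq1, hq2, -⟩ := hMsub q hq
      exact ⟨((hhead p' hp').1.mono hq1 hr1), ((hhead p' hp').2.mono hq2 hr2)⟩
    · intro q hq
      rcases List.mem_append.1 hq with h | h
      · exact hM.2 q h
      · exact hL''.2 q h
    · intro q hq
      rcases List.mem_append.1 hq with h | h
      · obtain ⟨hq1, hq2, hP⟩ := hMsub q h
        exact ⟨⟨p, by simp, hq1, hq2⟩, hP⟩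
      · obtain ⟨⟨p', hp', hr1, hr2⟩, hP⟩ := hsub'' q h
        exact ⟨⟨p', by simp [hp'], hr1, hr2⟩, hP⟩

/-- refine a matched pair into a matched list of small pieces -/
lemma refine_pair (hBX : HasCompactOpenBasis X) (hBY : HasCompactOpenBasis Y)
    (hgμ : Good μ) (hgν : Good ν) (hfμ : IsFull μ) (hfν : IsFull ν)
    (htr : Transfer μ ν) (htr' : Transfer ν μ)
    {U : Set X} {V : Set Y} (hU : IsCompactOpen U) (hV : IsCompactOpen V) (hm : μ U = ν V)
    {eps : ℝ≥0∞} (heps : 0 < eps) :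
    ∃ M, Pre μ ν M ∧
      (∀ q ∈ M, q.1 ⊆ U ∧ q.2 ⊆ V ∧ EMetric.diam q.1 ≤ eps ∧ EMetric.diam q.2 ≤ eps) ∧
      AU M = U ∧ BU M = V := by
  obtain ⟨us, husd, husp, husU⟩ := exists_small_partition hBX hU heps
  have hsum : (us.map (fun u => μ u)).sum = ν V := by
    rw [← meas_lU μ husd (fun s hs => (husp s hs).1), husU, hm]
  obtain ⟨M₁, hM₁, hM₁f, hM₁B⟩ :=
    exists_pair_split hgν hfν htr us (fun u hu => (husp u hu).1) husd V hV hsum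
  have hM₁A : AU M₁ = U := by rw [AU, hM₁f, husU]
  have F : ∀ p ∈ M₁, ∃ M, Pre μ ν M ∧
      (∀ q ∈ M, q.1 ⊆ p.1 ∧ q.2 ⊆ p.2 ∧
        (EMetric.diam q.1 ≤ eps ∧ EMetric.diam q.2 ≤ eps)) ∧ AU M = p.1 ∧ BU M = p.2 := by
    intro p hp
    obtain ⟨hp1, hp2, hpm⟩ := hM₁.2 p hp
    have hd1 : EMetric.diam p.1 ≤ eps := by
      have hmem : p.1 ∈ us := hM₁f ▸ List.mem_map.2 ⟨p, hp, rfl⟩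
      exact (husp _ hmem).2
    obtain ⟨vs, hvsd, hvsp, hvsV⟩ := exists_small_partition hBY hp2 heps
    have hsum2 : (vs.map (fun v => ν v)).sum = μ p.1 := by
      rw [← meas_lU ν hvsd (fun s hs => (hvsp s hs).1), hvsV, hpm]
    obtain ⟨N, hN, hNf, hNB⟩ :=
      exists_pair_split hgμ hfμ htr' vs (fun v hv => (hvsp v hv).1) hvsd p.1 hp1 hsum2
    refine ⟨N.map Prod.swap, pre_swap hN, ?_, by rw [AU_swap, hNB],
      by rw [BU_swap, AU, hNf, hvsV]⟩
    intro q hq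
    obtain ⟨r, hr, rfl⟩ := List.mem_map.1 hq
    have hr1 : r.1 ∈ vs := hNf ▸ List.mem_map.2 ⟨r, hr, rfl⟩
    have hr2 : r.2 ⊆ p.1 := hNB ▸ subset_BU hr
    have hr3 : r.1 ⊆ p.2 := hvsV ▸ subset_lU hr1
    exact ⟨hr2, hr3, (EMetric.diam_mono hr2).trans hd1, (hvsp _ hr1).2⟩
  obtain ⟨M, hM, hMsub, hMA, hMB⟩ := glue _ M₁ hM₁ F
  refine ⟨M, hM, ?_, by rw [hMA, hM₁A], by rw [hMB, hM₁B]⟩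
  intro q hq
  obtain ⟨⟨p, hp, hq1, hq2⟩, hP⟩ := hMsub q hq
  exact ⟨hq1.trans (hM₁A ▸ subset_AU hp), hq2.trans (hM₁B ▸ subset_BU hp), hP.1, hP.2⟩

/-- extend a matched list so that its domain covers a given compact open set -/
lemma extendX [Nonempty Y] [NoncompactSpace Y] [NoncompactSpace X]
    (hBY : HasCompactOpenBasis Y) (hgν : Good ν) (hfμ : IsFull μ) (htr : Transfer μ ν)
    {L} (hL : Pre μ ν L) {C : Set X} (hC : IsCompactOpen C) :
    ∃ p : Set X × Set Y, Pre μ ν (L ++ [p]) ∧ Disjoint p.1 (AU L) ∧ Disjoint p.2 (BU L) ∧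
      C ⊆ AU (L ++ [p]) := by
  have hAco := AU_co hL
  have hBco := BU_co hL
  set U₀ := C \ AU L with hU₀def
  have hU₀ : IsCompactOpen U₀ := co_diff hC hAco
  have hlt : ν (BU L) + μ U₀ < 1 := by
    rw [← pre_meq hL,
      ← measure_union (Set.disjoint_sdiff_right) (co_meas hU₀), Set.union_diff_self]
    exact meas_lt_one hfμ (co_union hAco hC)
  obtain ⟨W, hWco, hWd, hWm⟩ := exists_disjoint_piece hBY hgν htr hBco hU₀ hlt
  refine ⟨(U₀, W), ⟨?_, ?_⟩, Set.disjoint_sdiff_left, hWd.mono_right (le_refl _) |>.mono_left (le_refl _), ?_⟩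
  · rw [List.pairwise_append]
    refine ⟨hL.1, by simp, ?_⟩
    intro q hq r hr
    simp only [List.mem_singleton] at hr
    subst hr
    exact ⟨Set.disjoint_sdiff_left.symm.mono_left (subset_AU hq),
      hWd.symm.mono_left (subset_BU hq)⟩
  · intro p hp
    rcases List.mem_append.1 hp with h | h
    · exact hL.2 p h
    · simp only [List.mem_singleton] at h
      subst h
      exact ⟨hU₀, hWco, hWm.symm⟩
  · rw [AU_append]
    intro x hx
    by_cases hxA : x ∈ AU L
    · exact Or.inl hxA
    · refine Or.inr ?_
      rw [show [((U₀ : Set X), (W : Set Y))] = ((U₀, W) :: []) from rfl, AU_cons, AU_nil,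
        Set.union_empty]
      exact ⟨hx, hxA⟩

@[simp] lemma AU_singleton (p : Set X × Set Y) : AU [p] = p.1 := by
  rw [show [p] = p :: [] from rfl, AU_cons, AU_nil, Set.union_empty]
@[simp] lemma BU_singleton (p : Set X × Set Y) : BU [p] = p.2 := by
  rw [show [p] = p :: [] from rfl, BU_cons, BU_nil, Set.union_empty]

/-- refinement relation on matched lists -/
def Ref (L L' : List (Set X × Set Y)) : Prop :=
  AU L ⊆ AU L' ∧ BU L ⊆ BU L' ∧
  ∀ q ∈ L', (∃ p ∈ L, q.1 ⊆ p.1 ∧ q.2 ⊆ p.2) ∨ (Disjoint q.1 (AU L) ∧ Disjoint q.2 (BU L))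

lemma ref_trans {L L' L'' : List (Set X × Set Y)} (h : Ref L L') (h' : Ref L' L'') :
    Ref L L'' := by
  refine ⟨h.1.trans h'.1, h.2.1.trans h'.2.1, ?_⟩
  intro q hq
  rcases h'.2.2 q hq with ⟨p', hp', h1, h2⟩ | ⟨h1, h2⟩
  · rcases h.2.2 p' hp' with ⟨p, hp, g1, g2⟩ | ⟨g1, g2⟩
    · exact Or.inl ⟨p, hp, h1.trans g1, h2.trans g2⟩
    · exact Or.inr ⟨g1.mono_left h1, g2.mono_left h2⟩
  · exact Or.inr ⟨h1.mono_right h.1, h2.mono_right h.2.1⟩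

/-- the main induction step -/
lemma step [Nonempty X] [Nonempty Y] [NoncompactSpace X] [NoncompactSpace Y]
    (hBX : HasCompactOpenBasis X) (hBY : HasCompactOpenBasis Y)
    (hgμ : Good μ) (hgν : Good ν) (hfμ : IsFull μ) (hfν : IsFull ν)
    (htr : Transfer μ ν) (htr' : Transfer ν μ)
    {L} (hL : Pre μ ν L) {C : Set X} {D : Set Y} (hC : IsCompactOpen C)
    (hD : IsCompactOpen D) {eps : ℝ≥0∞} (heps : 0 < eps) :
    ∃ L', Pre μ ν L' ∧ Ref L L' ∧ C ⊆ AU L' ∧ D ⊆ BU L' ∧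
      ∀ q ∈ L', EMetric.diam q.1 ≤ eps ∧ EMetric.diam q.2 ≤ eps := by
  obtain ⟨p₁, hL₁, hd₁A, hd₁B, hC₁⟩ := extendX hBY hgν hfμ htr hL hC
  obtain ⟨p₂', hL₂', hd₂B, hd₂A, hD₂⟩ := extendX hBX hgμ hfν htr' (pre_swap hL₁) hD
  rw [AU_swap] at hd₂B
  rw [BU_swap] at hd₂A
  have hL₂ : Pre μ ν ((L ++ [p₁]) ++ [p₂'.swap]) := by
    have h := pre_swap hL₂'
    rwa [List.map_append, List.map_map, Prod.swap_swap_eq, List.map_id] at h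
  set L₂ := (L ++ [p₁]) ++ [p₂'.swap] with hL₂def
  have hAU₂ : AU L₂ = AU (L ++ [p₁]) ∪ p₂'.2 := by rw [hL₂def, AU_append, AU_singleton]; rfl
  have hBU₂ : BU L₂ = BU (L ++ [p₁]) ∪ p₂'.1 := by rw [hL₂def, BU_append, BU_singleton]; rfl
  have F : ∀ p ∈ L₂, ∃ M, Pre μ ν M ∧
      (∀ q ∈ M, q.1 ⊆ p.1 ∧ q.2 ⊆ p.2 ∧
        (EMetric.diam q.1 ≤ eps ∧ EMetric.diam q.2 ≤ eps)) ∧ AU M = p.1 ∧ BU M = p.2 := by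
    intro p hp
    obtain ⟨h1, h2, h3⟩ := hL₂.2 p hp
    exact refine_pair hBX hBY hgμ hgν hfμ hfν htr htr' h1 h2 h3 heps
  obtain ⟨L', hL', hsub, hA', hB'⟩ :=
    glue (fun q => EMetric.diam q.1 ≤ eps ∧ EMetric.diam q.2 ≤ eps) L₂ hL₂ F
  have hALL₁ : AU L ⊆ AU (L ++ [p₁]) := by rw [AU_append]; exact Set.subset_union_left
  have hBLL₁ : BU L ⊆ BU (L ++ [p₁]) := by rw [BU_append]; exact Set.subset_union_left
  refine ⟨L', hL', ⟨?_, ?_, ?_⟩, ?_, ?_, fun q hq => (hsub q hq).2⟩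
  · rw [hA', hAU₂]
    exact (hALL₁.trans Set.subset_union_left)
  · rw [hB', hBU₂]
    exact (hBLL₁.trans Set.subset_union_left)
  · intro q hq
    obtain ⟨⟨p, hp, hq1, hq2⟩, -⟩ := hsub q hq
    rw [hL₂def] at hp
    rcases List.mem_append.1 hp with hp | hp
    · rcases List.mem_append.1 hp with hp | hp
      · exact Or.inl ⟨p, hp, hq1, hq2⟩
      · simp only [List.mem_singleton] at hp
        subst hp
        exact Or.inr ⟨hd₁A.mono_left hq1, hd₁B.mono_left hq2⟩
    · simp only [List.mem_singleton] at hp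
      subst hp
      refine Or.inr ⟨?_, ?_⟩
      · exact (hd₂A.mono_left hq1).mono_right hALL₁
      · exact (hd₂B.mono_left hq2).mono_right hBLL₁
  · rw [hA', hAU₂]
    exact hC₁.trans Set.subset_union_left
  · rw [hB', hBU₂]
    have hD₂' : D ⊆ BU (L ++ [p₁]) ∪ p₂'.1 := by
      have := hD₂
      rwa [AU_append, AU_swap, AU_singleton] at this
    exact hD₂'

section Limit

variable {P : ℕ → List (Set X × Set Y)}

lemma inv_small {eps : ℝ≥0∞} (heps : 0 < eps) (n₀ : ℕ) :
    ∃ m : ℕ, n₀ ≤ m ∧ ((m : ℝ≥0∞))⁻¹ < eps := by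
  obtain ⟨n, hn⟩ := ENNReal.exists_inv_nat_lt heps.ne'
  refine ⟨max n₀ n, le_max_left _ _, lt_of_le_of_lt ?_ hn⟩
  exact ENNReal.inv_le_inv' (by exact_mod_cast le_max_right n₀ n)

lemma AU_mono (hRef : ∀ n, Ref (P n) (P (n+1))) {n m : ℕ} (hnm : n ≤ m) :
    AU (P n) ⊆ AU (P m) := by
  induction m with
  | zero => rw [Nat.le_zero.1 hnm]
  | succ m ih =>
    rcases eq_or_lt_of_le hnm with h | h
    · rw [h]
    · exact (ih (Nat.lt_succ_iff.1 h)).trans (hRef m).1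

lemma BU_mono (hRef : ∀ n, Ref (P n) (P (n+1))) {n m : ℕ} (hnm : n ≤ m) :
    BU (P n) ⊆ BU (P m) := by
  induction m with
  | zero => rw [Nat.le_zero.1 hnm]
  | succ m ih =>
    rcases eq_or_lt_of_le hnm with h | h
    · rw [h]
    · exact (ih (Nat.lt_succ_iff.1 h)).trans (hRef m).2.1

/-- same-level uniqueness -/
lemma pair_unique (hP : ∀ n, Pre μ ν (P n)) {n : ℕ} {p q : Set X × Set Y}
    (hp : p ∈ P n) (hq : q ∈ P n) (hov : (q.1 ∩ p.1).Nonempty) : q = p := by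
  by_contra hne
  obtain ⟨x, hx1, hx2⟩ := hov
  have hsymm : Symmetric (fun p q : Set X × Set Y => Disjoint p.1 q.1 ∧ Disjoint p.2 q.2) :=
    fun a b h => ⟨h.1.symm, h.2.symm⟩
  haveI : Std.Symm (fun p q : Set X × Set Y => Disjoint p.1 q.1 ∧ Disjoint p.2 q.2) := ⟨hsymm⟩
  exact ((hP n).1.forall hq hp hne).1.ne_of_mem hx1 hx2 rfl

lemma pair_unique2 (hP : ∀ n, Pre μ ν (P n)) {n : ℕ} {p q : Set X × Set Y}
    (hp : p ∈ P n) (hq : q ∈ P n) (hov : (q.2 ∩ p.2).Nonempty) : q = p := by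
  by_contra hne
  obtain ⟨x, hx1, hx2⟩ := hov
  have hsymm : Symmetric (fun p q : Set X × Set Y => Disjoint p.1 q.1 ∧ Disjoint p.2 q.2) :=
    fun a b h => ⟨h.1.symm, h.2.symm⟩
  haveI : Std.Symm (fun p q : Set X × Set Y => Disjoint p.1 q.1 ∧ Disjoint p.2 q.2) := ⟨hsymm⟩
  exact ((hP n).1.forall hq hp hne).2.ne_of_mem hx1 hx2 rfl

/-- nesting across levels, via first components -/
lemma nest (hP : ∀ n, Pre μ ν (P n)) (hRef : ∀ n, Ref (P n) (P (n+1)))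
    {n : ℕ} {p : Set X × Set Y} (hp : p ∈ P n) :
    ∀ {m : ℕ}, n ≤ m → ∀ {q : Set X × Set Y}, q ∈ P m →
    (q.1 ∩ p.1).Nonempty → q.1 ⊆ p.1 ∧ q.2 ⊆ p.2 := by
  intro m
  induction m with
  | zero =>
    intro hnm q hq hov
    rw [Nat.le_zero.1 hnm] at hp
    obtain rfl := pair_unique hP hp hq hov
    exact ⟨subset_rfl, subset_rfl⟩
  | succ m ih =>
    intro hnm q hq hov
    rcases eq_or_lt_of_le hnm with h | h
    · subst h
      obtain rfl := pair_unique hP hp hq hov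
      exact ⟨subset_rfl, subset_rfl⟩
    · have hnm' : n ≤ m := Nat.lt_succ_iff.1 h
      rcases (hRef m).2.2 q hq with ⟨q', hq', h1, h2⟩ | ⟨h1, -⟩
      · have hov' : (q'.1 ∩ p.1).Nonempty := hov.mono (Set.inter_subset_inter_left _ h1)
        obtain ⟨g1, g2⟩ := ih hnm' hq' hov'
        exact ⟨h1.trans g1, h2.trans g2⟩
      · exfalso
        obtain ⟨x, hx1, hx2⟩ := hov
        exact h1.ne_of_mem hx1 (AU_mono hRef hnm' (subset_AU hp hx2)) rfl

/-- nesting across levels, via second components -/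
lemma nest2 (hP : ∀ n, Pre μ ν (P n)) (hRef : ∀ n, Ref (P n) (P (n+1)))
    {n : ℕ} {p : Set X × Set Y} (hp : p ∈ P n) :
    ∀ {m : ℕ}, n ≤ m → ∀ {q : Set X × Set Y}, q ∈ P m →
    (q.2 ∩ p.2).Nonempty → q.1 ⊆ p.1 ∧ q.2 ⊆ p.2 := by
  intro m
  induction m with
  | zero =>
    intro hnm q hq hov
    rw [Nat.le_zero.1 hnm] at hp
    obtain rfl := pair_unique2 hP hp hq hov
    exact ⟨subset_rfl, subset_rfl⟩
  | succ m ih =>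
    intro hnm q hq hov
    rcases eq_or_lt_of_le hnm with h | h
    · subst h
      obtain rfl := pair_unique2 hP hp hq hov
      exact ⟨subset_rfl, subset_rfl⟩
    · have hnm' : n ≤ m := Nat.lt_succ_iff.1 h
      rcases (hRef m).2.2 q hq with ⟨q', hq', h1, h2⟩ | ⟨-, h1⟩
      · have hov' : (q'.2 ∩ p.2).Nonempty := hov.mono (Set.inter_subset_inter_left _ h2)
        obtain ⟨g1, g2⟩ := ih hnm' hq' hov'
        exact ⟨h1.trans g1, h2.trans g2⟩
      · exfalso
        obtain ⟨y, hy1, hy2⟩ := hov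
        exact h1.ne_of_mem hy1 (BU_mono hRef hnm' (subset_BU hp hy2)) rfl

/-- the one-sided limit map -/
lemma exists_map (hP : ∀ n, Pre μ ν (P n)) (hRef : ∀ n, Ref (P n) (P (n+1)))
    (hcovA : ∀ x : X, ∃ n, x ∈ AU (P n)) (hfμ : IsFull μ) (hfν : IsFull ν)
    (hdiam : ∀ n, ∀ q ∈ P n, EMetric.diam q.2 ≤ ((n : ℝ≥0∞))⁻¹) :
    ∃ h : X → Y, Continuous h ∧ ∀ x n p, p ∈ P n → x ∈ p.1 → h x ∈ p.2 := by
  classical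
  -- the piece containing x at level n
  have hex : ∀ (x : X) (n : ℕ), x ∈ AU (P n) → ∃ p ∈ P n, x ∈ p.1 := by
    intro x n hx
    obtain ⟨s, hs, hxs⟩ := Set.mem_iUnion₂.1 hx
    obtain ⟨p, hp, rfl⟩ := List.mem_map.1 hs
    exact ⟨p, hp, hxs⟩
  set pc : X → ℕ → Set X × Set Y := fun x n =>
    if h : ∃ p ∈ P n, x ∈ p.1 then h.choose else (∅, ∅) with hpc
  have hpc1 : ∀ (x : X) (n : ℕ), x ∈ AU (P n) → pc x n ∈ P n ∧ x ∈ (pc x n).1 := by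
    intro x n hx
    have h := hex x n hx
    rw [hpc]
    simp only [dif_pos h]
    exact ⟨h.choose_spec.1, h.choose_spec.2⟩
  -- nonempty pieces on the second coordinate
  have hne2 : ∀ {n : ℕ} {p : Set X × Set Y}, p ∈ P n → p.1.Nonempty → p.2.Nonempty := by
    intro n p hp hne
    obtain ⟨h1, h2, h3⟩ := (hP n).2 p hp
    by_contra hc
    rw [Set.not_nonempty_iff_eq_empty] at hc
    have : μ p.1 = 0 := by rw [h3, hc, measure_empty]
    rw [full_empty hfμ h1.2 this] at hne
    exact Set.not_nonempty_empty hne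
  -- the target set
  set T : X → Set Y := fun x => ⋂ n, if hx : x ∈ AU (P n) then (pc x n).2 else Set.univ with hT
  have hTne : ∀ x, (T x).Nonempty := by
    intro x
    obtain ⟨n₀, hn₀⟩ := hcovA x
    have hmem : ∀ m, n₀ ≤ m → x ∈ AU (P m) := fun m hm => AU_mono hRef hm hn₀
    set t : ℕ → Set Y := fun i => (pc x (n₀ + i)).2 with ht
    have hpci : ∀ i : ℕ, pc x (n₀ + i) ∈ P (n₀ + i) ∧ x ∈ (pc x (n₀ + i)).1 :=
      fun i => hpc1 x _ (hmem _ (Nat.le_add_right _ _))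
    have htsub : ∀ i, t (i + 1) ⊆ t i := by
      intro i
      have := nest hP hRef (hpci i).1 (Nat.add_le_add_left i.le_succ n₀) (hpci (i+1)).1
        ⟨x, (hpci (i+1)).2, (hpci i).2⟩
      exact this.2
    have htne : ∀ i, (t i).Nonempty := fun i => hne2 (hpci i).1 ⟨x, (hpci i).2⟩
    have htcl : ∀ i, IsClosed (t i) := fun i => ((hP _).2 _ (hpci i).1).2.1.1.isClosed
    have htcp : IsCompact (t 0) := ((hP _).2 _ (hpci 0).1).2.1.1
    have hint := IsCompact.nonempty_iInter_of_sequence_nonempty_isCompact_isClosed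
      t htsub htne htcp htcl
    obtain ⟨y, hy⟩ := hint
    refine ⟨y, ?_⟩
    rw [hT]
    simp only [Set.mem_iInter]
    intro n
    by_cases hx : x ∈ AU (P n)
    · rw [dif_pos hx]
      -- the piece at level n contains t (max n n₀ - n₀ + ...)
      have hle : n ≤ n₀ + (max n n₀ - n₀) := by omega
      have := nest hP hRef (hpc1 x n hx).1 hle (hpci (max n n₀ - n₀)).1
        ⟨x, (hpci (max n n₀ - n₀)).2, (hpc1 x n hx).2⟩
      exact this.2 (Set.mem_iInter.1 hy (max n n₀ - n₀))
    · rw [dif_neg hx]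
      exact Set.mem_univ y
  set f : X → Y := fun x => (hTne x).some with hf
  have hfmem : ∀ x n p, p ∈ P n → x ∈ p.1 → f x ∈ p.2 := by
    intro x n p hp hxp
    have hx : x ∈ AU (P n) := subset_AU hp hxp
    have h1 : f x ∈ T x := (hTne x).some_mem
    have h2 := Set.mem_iInter.1 h1 n
    rw [dif_pos hx] at h2
    obtain rfl := pair_unique hP hp (hpc1 x n hx).1 ⟨x, (hpc1 x n hx).2, hxp⟩
    exact h2
  refine ⟨f, ?_, hfmem⟩
  rw [continuous_iff_continuousAt]
  intro x
  intro O hO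
  rw [Filter.mem_map]
  rw [EMetric.mem_nhds_iff] at hO
  obtain ⟨eps, heps, hball⟩ := hO
  obtain ⟨n₀, hn₀⟩ := hcovA x
  obtain ⟨m, hm₁, hm₂⟩ := inv_small heps n₀
  have hx : x ∈ AU (P m) := AU_mono hRef hm₁ hn₀
  obtain ⟨hpm, hxm⟩ := hpc1 x m hx
  apply Filter.mem_of_superset (((hP m).2 _ hpm).1.2.mem_nhds hxm)
  intro x' hx'
  have h1 : f x' ∈ (pc x m).2 := hfmem x' m _ hpm hx'
  have h2 : f x ∈ (pc x m).2 := hfmem x m _ hpm hxm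
  apply hball
  exact EMetric.mem_ball.2
    (lt_of_le_of_lt ((EMetric.edist_le_diam_of_mem h1 h2).trans (hdiam m _ hpm)) hm₂)

lemma mem_of_AU {L : List (Set X × Set Y)} {x : X} (hx : x ∈ AU L) : ∃ p ∈ L, x ∈ p.1 := by
  obtain ⟨s, hs, hxs⟩ := Set.mem_iUnion₂.1 hx
  obtain ⟨p, hp, rfl⟩ := List.mem_map.1 hs
  exact ⟨p, hp, hxs⟩

lemma mem_of_BU {L : List (Set X × Set Y)} {y : Y} (hy : y ∈ BU L) : ∃ p ∈ L, y ∈ p.2 := by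
  obtain ⟨s, hs, hys⟩ := Set.mem_iUnion₂.1 hy
  obtain ⟨p, hp, rfl⟩ := List.mem_map.1 hs
  exact ⟨p, hp, hys⟩

/-- the main limit construction -/
lemma limit (hP : ∀ n, Pre μ ν (P n)) (hRef : ∀ n, Ref (P n) (P (n+1)))
    (hcovA : ∀ x : X, ∃ n, x ∈ AU (P n)) (hcovB : ∀ y : Y, ∃ n, y ∈ BU (P n))
    (hfμ : IsFull μ) (hfν : IsFull ν)
    (hdiam1 : ∀ n, ∀ q ∈ P n, EMetric.diam q.1 ≤ ((n : ℝ≥0∞))⁻¹)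
    (hdiam2 : ∀ n, ∀ q ∈ P n, EMetric.diam q.2 ≤ ((n : ℝ≥0∞))⁻¹) :
    ∃ h : X ≃ₜ Y, ∀ E : Set X, MeasurableSet E → μ E = ν (h '' E) := by
  obtain ⟨f, hfc, hfmem⟩ := exists_map hP hRef hcovA hfμ hfν hdiam2
  -- the swapped system
  set Q : ℕ → List (Set Y × Set X) := fun n => (P n).map Prod.swap with hQ
  have hQP : ∀ n, Pre ν μ (Q n) := fun n => pre_swap (hP n)
  have hQRef : ∀ n, Ref (Q n) (Q (n+1)) := by
    intro n
    refine ⟨?_, ?_, ?_⟩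
    · simp only [hQ, AU_swap]; exact (hRef n).2.1
    · simp only [hQ, BU_swap]; exact (hRef n).1
    · intro q hq
      obtain ⟨p, hp, rfl⟩ := List.mem_map.1 hq
      rcases (hRef n).2.2 p hp with ⟨r, hr, h1, h2⟩ | ⟨h1, h2⟩
      · exact Or.inl ⟨r.swap, List.mem_map.2 ⟨r, hr, rfl⟩, h2, h1⟩
      · refine Or.inr ⟨?_, ?_⟩
        · simp only [hQ, AU_swap]; exact h2
        · simp only [hQ, BU_swap]; exact h1
  have hQcov : ∀ y : Y, ∃ n, y ∈ AU (Q n) := by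
    intro y
    obtain ⟨n, hn⟩ := hcovB y
    exact ⟨n, by simp only [hQ, AU_swap]; exact hn⟩
  have hQdiam : ∀ n, ∀ q ∈ Q n, EMetric.diam q.2 ≤ ((n : ℝ≥0∞))⁻¹ := by
    intro n q hq
    obtain ⟨p, hp, rfl⟩ := List.mem_map.1 hq
    exact hdiam1 n p hp
  obtain ⟨g, hgc, hgmem₀⟩ := exists_map hQP hQRef hQcov hfν hfμ hQdiam
  have hgmem : ∀ (y : Y) n p, p ∈ P n → y ∈ p.2 → g y ∈ p.1 := by
    intro y n p hp hy
    exact hgmem₀ y n p.swap (List.mem_map.2 ⟨p, hp, rfl⟩) hy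
  -- inverse identities
  have hgf : ∀ x, g (f x) = x := by
    intro x
    by_contra hne
    have hpos : 0 < edist (g (f x)) x := edist_pos.2 hne
    obtain ⟨n₀, hn₀⟩ := hcovA x
    obtain ⟨m, hm₁, hm₂⟩ := inv_small hpos n₀
    obtain ⟨p, hp, hxp⟩ := mem_of_AU (AU_mono hRef hm₁ hn₀)
    have h1 : f x ∈ p.2 := hfmem x m p hp hxp
    have h2 : g (f x) ∈ p.1 := hgmem (f x) m p hp h1
    have h3 : edist (g (f x)) x ≤ EMetric.diam p.1 := EMetric.edist_le_diam_of_mem h2 hxp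
    exact absurd (h3.trans (hdiam1 m p hp)) (not_le.2 hm₂)
  have hfg : ∀ y, f (g y) = y := by
    intro y
    by_contra hne
    have hpos : 0 < edist (f (g y)) y := edist_pos.2 hne
    obtain ⟨n₀, hn₀⟩ := hcovB y
    obtain ⟨m, hm₁, hm₂⟩ := inv_small hpos n₀
    obtain ⟨p, hp, hyp⟩ := mem_of_BU (BU_mono hRef hm₁ hn₀)
    have h1 : g y ∈ p.1 := hgmem y m p hp hyp
    have h2 : f (g y) ∈ p.2 := hfmem (g y) m p hp h1
    have h3 : edist (f (g y)) y ≤ EMetric.diam p.2 := EMetric.edist_le_diam_of_mem h2 hyp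
    exact absurd (h3.trans (hdiam2 m p hp)) (not_le.2 hm₂)
  -- preimages of pieces
  have hpre : ∀ n p, p ∈ P n → f ⁻¹' p.2 = p.1 := by
    intro n p hp
    apply subset_antisymm
    · intro x hx
      have := hgmem (f x) n p hp hx
      rwa [hgf x] at this
    · intro x hx
      exact hfmem x n p hp hx
  -- the π-system of second components
  set C : Set (Set Y) := {s | s.Nonempty ∧ ∃ n, ∃ p ∈ P n, s = p.2} with hC
  have hpi : IsPiSystem C := by
    rintro s ⟨hsne, n, p, hp, rfl⟩ t ⟨htne, m, q, hq, rfl⟩ hst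
    rcases le_total n m with h | h
    · have hs := nest2 hP hRef hp h hq (by rwa [Set.inter_comm] at hst)
      rw [Set.inter_eq_right.2 hs.2]
      exact ⟨htne, m, q, hq, rfl⟩
    · have hs := nest2 hP hRef hq h hp hst
      rw [Set.inter_eq_left.2 hs.2]
      exact ⟨hsne, n, p, hp, rfl⟩
  have hcnt : C.Countable := by
    have hsub : C ⊆ ⋃ n, Prod.snd '' {p | p ∈ P n} := by
      rintro s ⟨-, n, p, hp, rfl⟩
      exact Set.mem_iUnion.2 ⟨n, ⟨p, hp, rfl⟩⟩
    exact (Set.countable_iUnion fun n =>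
      (((P n).finite_toSet).image Prod.snd).countable).mono hsub
  -- every open set is a countable union of elements of C
  have hopen : ∀ O : Set Y, IsOpen O → O = ⋃₀ {s | s ∈ C ∧ s ⊆ O} := by
    intro O hO
    apply subset_antisymm
    · intro y hy
      have hnhd : O ∈ nhds y := hO.mem_nhds hy
      rw [EMetric.mem_nhds_iff] at hnhd
      obtain ⟨eps, heps, hball⟩ := hnhd
      obtain ⟨n₀, hn₀⟩ := hcovB y
      obtain ⟨m, hm₁, hm₂⟩ := inv_small heps n₀
      obtain ⟨p, hp, hyp⟩ := mem_of_BU (BU_mono hRef hm₁ hn₀)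
      have hsubO : p.2 ⊆ O := by
        intro z hz
        apply hball
        exact EMetric.mem_ball.2 (lt_of_le_of_lt
          ((EMetric.edist_le_diam_of_mem hz hyp).trans (hdiam2 m p hp)) hm₂)
      exact ⟨p.2, ⟨⟨⟨y, hyp⟩, m, p, hp, rfl⟩, hsubO⟩, hyp⟩
    · rintro y ⟨s, ⟨-, hsO⟩, hys⟩
      exact hsO hys
  have hgen : (inferInstance : MeasurableSpace Y) = MeasurableSpace.generateFrom C := by
    rw [BorelSpace.measurable_eq (α := Y)]
    have hb : borel Y = MeasurableSpace.generateFrom {s : Set Y | IsOpen s} := rfl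
    apply le_antisymm
    · rw [hb]
      apply MeasurableSpace.generateFrom_le
      intro O hO
      rw [hopen O hO]
      apply MeasurableSet.sUnion (hcnt.mono (Set.sep_subset _ _))
      intro s hs
      exact MeasurableSpace.measurableSet_generateFrom hs.1
    · apply MeasurableSpace.generateFrom_le
      rintro s ⟨-, n, p, hp, rfl⟩
      rw [hb]
      exact MeasurableSpace.measurableSet_generateFrom ((hP n).2 p hp).2.1.2
  haveI : IsProbabilityMeasure (Measure.map f μ) :=
    Measure.isProbabilityMeasure_map hfc.measurable.aemeasurable
  have hmap : Measure.map f μ = ν := by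
    apply MeasureTheory.ext_of_generate_finite C hgen hpi
    · rintro s ⟨-, n, p, hp, rfl⟩
      rw [Measure.map_apply hfc.measurable ((hP n).2 p hp).2.1.2.measurableSet, hpre n p hp]
      exact ((hP n).2 p hp).2.2
    · rw [measure_univ, measure_univ]
  refine ⟨⟨⟨f, g, hgf, hfg⟩, hfc, hgc⟩, ?_⟩
  intro E hE
  have himg : (⟨⟨f, g, hgf, hfg⟩, hfc, hgc⟩ : X ≃ₜ Y) '' E = g ⁻¹' E := by
    ext y
    simp only [Set.mem_image, Set.mem_preimage]
    constructor
    · rintro ⟨x, hx, rfl⟩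
      show g (f x) ∈ E
      rwa [hgf x]
    · intro hy
      exact ⟨g y, hy, hfg y⟩
  rw [himg, ← hmap, Measure.map_apply hfc.measurable (hgc.measurable hE)]
  congr 1
  ext x
  simp only [Set.mem_preimage]
  rw [hgf x]

end Limit
end Pairs
end Two
end Akin

open Akin in
theorem stmt14 {X Y : Type*}
    [TopologicalSpace X] [MeasurableSpace X] [BorelSpace X] [MetrizableSpace X]
    [LocallyCompactSpace X] [TotallyDisconnectedSpace X] [NoncompactSpace X]
    [TopologicalSpace Y] [MeasurableSpace Y] [BorelSpace Y] [MetrizableSpace Y]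
    [LocallyCompactSpace Y] [TotallyDisconnectedSpace Y] [NoncompactSpace Y]
    (hBX : HasCompactOpenBasis X) (hniX : NoIsolatedPoints X)
    (hBY : HasCompactOpenBasis Y) (hniY : NoIsolatedPoints Y)
    (μ : Measure X) (ν : Measure Y)
    [IsProbabilityMeasure μ] [IsProbabilityMeasure ν]
    (hfullμ : IsFull μ) (hnaμ : NonAtomic μ)
    (hfullν : IsFull ν) (hnaν : NonAtomic ν)
    (hgμ : Good μ) (hgν : Good ν) (hS : Sreal μ = Sreal ν) :
    ∃ h : X ≃ₜ Y, ∀ E : Set X, MeasurableSet E → μ E = ν (h '' E) := by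
  letI : MetricSpace X := TopologicalSpace.metrizableSpaceMetric X
  letI : MetricSpace Y := TopologicalSpace.metrizableSpaceMetric Y
  haveI : Nonempty X := by
    by_contra h
    rw [not_nonempty_iff] at h
    exact NoncompactSpace.noncompact_univ (X := X)
      (by rw [Set.univ_eq_empty_iff.2 h]; exact isCompact_empty)
  haveI : Nonempty Y := by
    by_contra h
    rw [not_nonempty_iff] at h
    exact NoncompactSpace.noncompact_univ (X := Y)
      (by rw [Set.univ_eq_empty_iff.2 h]; exact isCompact_empty)
  have htr : Transfer μ ν := transfer_of_Sreal hS
  have htr' : Transfer ν μ := transfer_of_Sreal hS.symm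
  obtain ⟨K, hKmono, hKco, hKun⟩ := exists_exhaustion hBX
  obtain ⟨K', hK'mono, hK'co, hK'un⟩ := exists_exhaustion hBY
  have hstep : ∀ (n : ℕ) (L : List (Set X × Set Y)), Pre μ ν L →
      ∃ L', Pre μ ν L' ∧ Ref L L' ∧ K n ⊆ AU L' ∧ K' n ⊆ BU L' ∧
        ∀ q ∈ L', EMetric.diam q.1 ≤ (((n+1 : ℕ) : ℝ≥0∞))⁻¹ ∧
          EMetric.diam q.2 ≤ (((n+1 : ℕ) : ℝ≥0∞))⁻¹ := by
    intro n L hL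
    exact step hBX hBY hgμ hgν hfullμ hfullν htr htr' hL (hKco n) (hK'co n)
      (ENNReal.inv_pos.2 (ENNReal.natCast_ne_top _))
  choose F hF1 hF2 hF3 hF4 hF5 using hstep
  have hnil : Pre μ ν ([] : List (Set X × Set Y)) := ⟨List.Pairwise.nil, by simp⟩
  let Ps : ℕ → {L : List (Set X × Set Y) // Pre μ ν L} := fun n =>
    Nat.rec ⟨[], hnil⟩ (fun n p => ⟨F n p.1 p.2, hF1 n p.1 p.2⟩) n
  set P : ℕ → List (Set X × Set Y) := fun n => (Ps n).1 with hPdef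
  have hP : ∀ n, Pre μ ν (P n) := fun n => (Ps n).2
  have hPsucc : ∀ n, P (n + 1) = F n (P n) (hP n) := fun n => rfl
  have hRef : ∀ n, Ref (P n) (P (n+1)) := by
    intro n
    rw [hPsucc n]
    exact hF2 n (P n) (hP n)
  have hdiam1 : ∀ n, ∀ q ∈ P n, EMetric.diam q.1 ≤ ((n : ℝ≥0∞))⁻¹ := by
    intro n
    match n with
    | 0 => intro q hq; simp
    | (n+1) =>
      intro q hq
      rw [hPsucc n] at hq
      exact (hF5 n (P n) (hP n) q hq).1
  have hdiam2 : ∀ n, ∀ q ∈ P n, EMetric.diam q.2 ≤ ((n : ℝ≥0∞))⁻¹ := by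
    intro n
    match n with
    | 0 => intro q hq; simp
    | (n+1) =>
      intro q hq
      rw [hPsucc n] at hq
      exact (hF5 n (P n) (hP n) q hq).2
  have hcovA : ∀ x : X, ∃ n, x ∈ AU (P n) := by
    intro x
    have hx : x ∈ ⋃ n, K n := hKun ▸ Set.mem_univ x
    obtain ⟨n, hn⟩ := Set.mem_iUnion.1 hx
    refine ⟨n + 1, ?_⟩
    rw [hPsucc n]
    exact hF3 n (P n) (hP n) hn
  have hcovB : ∀ y : Y, ∃ n, y ∈ BU (P n) := by
    intro y
    have hy : y ∈ ⋃ n, K' n := hK'un ▸ Set.mem_univ y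
    obtain ⟨n, hn⟩ := Set.mem_iUnion.1 hy
    refine ⟨n + 1, ?_⟩
    rw [hPsucc n]
    exact hF4 n (P n) (hP n) hn
  exact limit hP hRef hcovA hcovB hfullμ hfullν hdiam1 hdiam2
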